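/- arXiv:1403.2340 — 2 statements merged into one kernel-verified Lean document; each statement's English description precedes it below -/
import Mathlib

section
/- Let X be a convex subset of ℝ^d, let g : X → ℝ be a Lipschitz function, let η ≥ 0, and let x, y, z, x', y', z' be six points of X such that ‖x − x'‖ ≤ η, ‖y − y'‖ ≤ η, ‖z − z'‖ ≤ η, with x ≠ y, x' ≠ y', z on the segment [x,y] and z' on the segment [x',y']. Then |ℓ_{xyz}(g) − ℓ_{x'y'z'}(g)| ≤ 6 η Lip(g). -/
open NNReal

/-- The value of the affine form `ℓ_{xyz}` on a function `g` : with `λ = ‖z−y‖/‖x−y‖`,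
`ℓ_{xyz}(g) = g(z) − λ g(x) − (1−λ) g(y)`. -/
noncomputable def ellVal {d : ℕ} (g : EuclideanSpace ℝ (Fin d) → ℝ)
    (x y z : EuclideanSpace ℝ (Fin d)) : ℝ :=
  g z - (‖z - y‖ / ‖x - y‖) * g x - (1 - ‖z - y‖ / ‖x - y‖) * g y

lemma seg_norm_le {d : ℕ} {x y z : EuclideanSpace ℝ (Fin d)}
    (hz : z ∈ segment ℝ x y) : ‖z - y‖ ≤ ‖x - y‖ := by
  obtain ⟨t, s, ht, hs, hts, rfl⟩ := hz
  have hkey : t • x + s • y - y = t • (x - y) := by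
    have hs1 : s = 1 - t := by linarith
    subst hs1
    module
  rw [hkey, norm_smul, Real.norm_eq_abs, abs_of_nonneg ht]
  have ht1 : t ≤ 1 := by linarith
  nlinarith [norm_nonneg (x - y)]

/-- Let `X ⊆ ℝ^d` be convex, `g : X → ℝ` Lipschitz, `η ≥ 0`, and let
`x, y, z, x', y', z' ∈ X` with `‖x−x'‖ ≤ η`, `‖y−y'‖ ≤ η`, `‖z−z'‖ ≤ η`, `x ≠ y`,
`x' ≠ y'`, `z ∈ [x,y]`, `z' ∈ [x',y']`.  Then `|ℓ_{xyz}(g) − ℓ_{x'y'z'}(g)| ≤ 6η·Lip(g)`. -/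
theorem stmt7 {d : ℕ} (X : Set (EuclideanSpace ℝ (Fin d))) (hX : Convex ℝ X)
    (g : EuclideanSpace ℝ (Fin d) → ℝ) (L : ℝ≥0) (hg : LipschitzOnWith L g X)
    (η : ℝ) (hη : 0 ≤ η) (x y z x' y' z' : EuclideanSpace ℝ (Fin d))
    (hx : x ∈ X) (hy : y ∈ X) (hzX : z ∈ X) (hx' : x' ∈ X) (hy' : y' ∈ X) (hz'X : z' ∈ X)
    (hxy : x ≠ y) (hxy' : x' ≠ y')
    (hzseg : z ∈ segment ℝ x y) (hz'seg : z' ∈ segment ℝ x' y')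
    (h1 : ‖x - x'‖ ≤ η) (h2 : ‖y - y'‖ ≤ η) (h3 : ‖z - z'‖ ≤ η) :
    |ellVal g x y z - ellVal g x' y' z'| ≤ 6 * η * L := by
  have hL0 : (0:ℝ) ≤ L := L.coe_nonneg
  have hxyne : ‖x - y‖ ≠ 0 := by simpa [sub_eq_zero] using hxy
  have hxyne' : ‖x' - y'‖ ≠ 0 := by simpa [sub_eq_zero] using hxy'
  set a := ‖z - y‖ / ‖x - y‖ with ha
  set b := ‖z' - y'‖ / ‖x' - y'‖ with hb
  have ha0 : 0 ≤ a := div_nonneg (norm_nonneg _) (norm_nonneg _)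
  have ha1 : a ≤ 1 := div_le_one_of_le₀ (seg_norm_le hzseg) (norm_nonneg _)
  have haxy : a * ‖x - y‖ = ‖z - y‖ := div_mul_cancel₀ _ hxyne
  have hbxy : b * ‖x' - y'‖ = ‖z' - y'‖ := div_mul_cancel₀ _ hxyne'
  -- Lipschitz bounds
  have lip : ∀ p ∈ X, ∀ q ∈ X, |g p - g q| ≤ L * ‖p - q‖ := by
    intro p hp q hq
    have := hg.dist_le_mul p hp q hq
    simpa [Real.dist_eq, dist_eq_norm] using this
  have lx : |g x - g x'| ≤ L * η := le_trans (lip x hx x' hx')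
    (by exact mul_le_mul_of_nonneg_left h1 hL0)
  have ly : |g y - g y'| ≤ L * η := le_trans (lip y hy y' hy')
    (by exact mul_le_mul_of_nonneg_left h2 hL0)
  have lz : |g z - g z'| ≤ L * η := le_trans (lip z hzX z' hz'X)
    (by exact mul_le_mul_of_nonneg_left h3 hL0)
  have lxy' : |g x' - g y'| ≤ L * ‖x' - y'‖ := lip x' hx' y' hy'
  -- key: |a - b| * ‖x' - y'‖ ≤ 4 η
  have hn : |‖x' - y'‖ - ‖x - y‖| ≤ 2 * η := by
    have h := abs_norm_sub_norm_le (x' - y') (x - y)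
    have h' : ‖(x' - y') - (x - y)‖ ≤ 2 * η := by
      have : (x' - y') - (x - y) = (x' - x) - (y' - y) := by abel
      rw [this]
      calc ‖(x' - x) - (y' - y)‖ ≤ ‖x' - x‖ + ‖y' - y‖ := norm_sub_le _ _
        _ ≤ 2 * η := by rw [norm_sub_rev x', norm_sub_rev y']; linarith
    linarith
  have hm : |‖z - y‖ - ‖z' - y'‖| ≤ 2 * η := by
    have h := abs_norm_sub_norm_le (z - y) (z' - y')
    have h' : ‖(z - y) - (z' - y')‖ ≤ 2 * η := by
      have : (z - y) - (z' - y') = (z - z') - (y - y') := by abel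
      rw [this]
      calc ‖(z - z') - (y - y')‖ ≤ ‖z - z'‖ + ‖y - y'‖ := norm_sub_le _ _
        _ ≤ 2 * η := by linarith
    linarith
  have key : |a - b| * ‖x' - y'‖ ≤ 4 * η := by
    have e1 : |a - b| * ‖x' - y'‖ = |a * ‖x' - y'‖ - b * ‖x' - y'‖| := by
      rw [← abs_of_nonneg (norm_nonneg (x' - y')), ← abs_mul, sub_mul,
        abs_of_nonneg (norm_nonneg (x' - y'))]
    rw [e1, hbxy]
    have e2 : |a * ‖x' - y'‖ - a * ‖x - y‖| ≤ 2 * η := by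
      rw [← mul_sub, abs_mul, abs_of_nonneg ha0]
      calc a * |‖x' - y'‖ - ‖x - y‖| ≤ 1 * |‖x' - y'‖ - ‖x - y‖| :=
            mul_le_mul_of_nonneg_right ha1 (abs_nonneg _)
        _ ≤ 2 * η := by rw [one_mul]; exact hn
    calc |a * ‖x' - y'‖ - ‖z' - y'‖|
        ≤ |a * ‖x' - y'‖ - a * ‖x - y‖| + |a * ‖x - y‖ - ‖z' - y'‖| := abs_sub_le _ _ _
      _ ≤ 2 * η + 2 * η := add_le_add e2 (by rw [haxy]; exact hm)
      _ = 4 * η := by ring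
  -- combine
  have expand : ellVal g x y z - ellVal g x' y' z' =
      (g z - g z') - a * (g x - g x') - (1 - a) * (g y - g y') - (a - b) * (g x' - g y') := by
    simp only [ellVal, ← ha, ← hb]; ring
  rw [expand]
  have hA : |a * (g x - g x')| ≤ a * (L * η) := by
    rw [abs_mul, abs_of_nonneg ha0]; exact mul_le_mul_of_nonneg_left lx ha0
  have hB : |(1 - a) * (g y - g y')| ≤ (1 - a) * (L * η) := by
    rw [abs_mul, abs_of_nonneg (by linarith : (0:ℝ) ≤ 1 - a)]
    exact mul_le_mul_of_nonneg_left ly (by linarith)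
  have hC : |(a - b) * (g x' - g y')| ≤ 4 * η * L := by
    rw [abs_mul]
    calc |a - b| * |g x' - g y'| ≤ |a - b| * (L * ‖x' - y'‖) :=
          mul_le_mul_of_nonneg_left lxy' (abs_nonneg _)
      _ = (|a - b| * ‖x' - y'‖) * L := by ring
      _ ≤ 4 * η * L := mul_le_mul_of_nonneg_right key hL0
  calc |(g z - g z') - a * (g x - g x') - (1 - a) * (g y - g y') - (a - b) * (g x' - g y')|
      ≤ |(g z - g z') - a * (g x - g x') - (1 - a) * (g y - g y')| + |(a - b) * (g x' - g y')| :=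
        abs_sub _ _
    _ ≤ (|(g z - g z') - a * (g x - g x')| + |(1 - a) * (g y - g y')|) + |(a - b) * (g x' - g y')| := by
        gcongr; exact abs_sub _ _
    _ ≤ ((|g z - g z'| + |a * (g x - g x')|) + |(1 - a) * (g y - g y')|) + |(a - b) * (g x' - g y')| := by
        gcongr; exact abs_sub _ _
    _ ≤ ((L * η + a * (L * η)) + (1 - a) * (L * η)) + 4 * η * L := by
        exact add_le_add (add_le_add (add_le_add lz hA) hB) hC
    _ = 6 * η * L := by ring
end

section
/- Let X and Y be bounded open subsets of ℝ^n and let c : X̄ × Ȳ → ℝ be C¹ in its first variable and differentiable in its second variable. For y ∈ Y, let X_y = {−∇_y c(x,y) : x ∈ X} and suppose there is a map E_y : X_y → X with E_y(−∇_y c(x,y)) = x for every x ∈ X (the c-exponential map, condition (A1)). Assume the non-negative cross-curvature condition (A3): for every pair y₀, y ∈ Y, the map v ∈ X_{y₀} ↦ c(E_{y₀}(v), y₀) − c(E_{y₀}(v), y) is convex on X_{y₀} (in particular each X_{y₀} is convex). Let ψ : Y → ℝ be such that φ(x) = sup_{y∈Y} (−ψ(y) − c(x,y)) is finite for all x ∈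 X. Then for every y ∈ Y, the function φ_y : v ∈ X_y ↦ φ(E_y(v)) + c(E_y(v), y) is convex on X_y. -/
open Set

noncomputable section

abbrev Esp (n : ℕ) := EuclideanSpace ℝ (Fin n)

/-- Let `X, Y ⊆ ℝ^n` be bounded open sets and `c : X̄ × Ȳ → ℝ` be `C¹` in
its first variable and differentiable in its second variable, with `∇_y c = cy`.  For
`y ∈ Y` let `X_y = {−∇_y c(x,y) : x ∈ X}` and suppose there is a `c`-exponential map
`E_y : X_y → X` with `E_y(−∇_y c(x,y)) = x` for all `x ∈ X` (condition (A1)).  Assume the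
non-negative cross-curvature condition (A3): for every `y₀, y ∈ Y`, the map
`v ∈ X_{y₀} ↦ c(E_{y₀}(v), y₀) − c(E_{y₀}(v), y)` is convex on `X_{y₀}` (in particular
`X_{y₀}` is convex).  Let `ψ : Y → ℝ` be such that `φ(x) = sup_{y ∈ Y}(−ψ(y) − c(x,y))` is
finite for all `x ∈ X`.  Then for every `y ∈ Y` the function
`φ_y : v ∈ X_y ↦ φ(E_y(v)) + c(E_y(v), y)` is convex on `X_y`. -/
theorem stmt16 (n : ℕ) (X Y : Set (Esp n)) (hXo : IsOpen X) (hXb : Bornology.IsBounded X)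
    (hYo : IsOpen Y) (hYb : Bornology.IsBounded Y)
    (c : Esp n → Esp n → ℝ)
    (hc1 : ∀ y ∈ closure Y, ContDiffOn ℝ 1 (fun x => c x y) (closure X))
    (cy : Esp n → Esp n → Esp n)
    (hcy : ∀ x ∈ X, ∀ y ∈ Y, HasGradientAt (fun y' => c x y') (cy x y) y)
    (E : Esp n → Esp n → Esp n)
    (hE : ∀ y ∈ Y, ∀ x ∈ X, E y (-(cy x y)) = x)
    (hErange : ∀ y ∈ Y, ∀ v ∈ (fun x => -(cy x y)) '' X, E y v ∈ X)
    (hA3 : ∀ y₀ ∈ Y, ∀ y ∈ Y,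
      ConvexOn ℝ ((fun x => -(cy x y₀)) '' X)
        (fun v => c (E y₀ v) y₀ - c (E y₀ v) y))
    (ψ : Esp n → ℝ) (φ : Esp n → ℝ)
    (hφ : ∀ x ∈ X, IsLUB {t : ℝ | ∃ y ∈ Y, t = -ψ y - c x y} (φ x)) :
    ∀ y ∈ Y, ConvexOn ℝ ((fun x => -(cy x y)) '' X)
      (fun v => φ (E y v) + c (E y v) y) := by
  intro y hy
  have hconv := (hA3 y hy y hy).1
  refine ⟨hconv, ?_⟩
  intro v₁ h1 v₂ h2 a b ha hb hab
  set vt := a • v₁ + b • v₂ with hvt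
  have hvt_mem : vt ∈ (fun x => -(cy x y)) '' X := hconv h1 h2 ha hb hab
  have hxt : E y vt ∈ X := hErange y hy vt hvt_mem
  have hlub := hφ (E y vt) hxt
  have hub : φ (E y vt) ≤
      (a * (φ (E y v₁) + c (E y v₁) y) + b * (φ (E y v₂) + c (E y v₂) y))
        - c (E y vt) y := by
    apply hlub.2
    rintro t ⟨y', hy', rfl⟩
    have hA := (hA3 y hy y' hy').2 h1 h2 ha hb hab
    simp only [smul_eq_mul] at hA
    rw [show a • v₁ + b • v₂ = vt from rfl] at hA
    have hb1 : -ψ y' - c (E y v₁) y' ≤ φ (E y v₁) :=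
      (hφ (E y v₁) (hErange y hy v₁ h1)).1 ⟨y', hy', rfl⟩
    have hb2 : -ψ y' - c (E y v₂) y' ≤ φ (E y v₂) :=
      (hφ (E y v₂) (hErange y hy v₂ h2)).1 ⟨y', hy', rfl⟩
    have hψ : a * (-ψ y') + b * (-ψ y') = -ψ y' := by
      rw [← add_mul, hab, one_mul]
    linarith [mul_le_mul_of_nonneg_left hb1 ha, mul_le_mul_of_nonneg_left hb2 hb, hA, hψ]
  simp only [smul_eq_mul]
  linarith [hub]

end
end
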